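/- If h is a positive integer such that both h and h+1 are harmonic numbers, then h ∈ {1, 2, 3, 8}. Equivalently, the only two consecutive harmonic numbers greater than 4 are 8 and 9 (Gersonides' Theorem, 1342). -/

import Mathlib

/-- A harmonic number is a positive integer of the form 2^a * 3^b. -/
def IsHarmonic (n : ℕ) : Prop := ∃ a b : ℕ, n = 2 ^ a * 3 ^ b

lemma gers_aux1 (b c : ℕ) (heq : 3 ^ b + 1 = 2 ^ c) : b ≤ 1 := by
  by_contra hb
  push_neg at hb
  have h9 : (9:ℕ) ≤ 3 ^ b := by
    calc (9:ℕ) = 3 ^ 2 := by norm_num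
    _ ≤ 3 ^ b := Nat.pow_le_pow_right (by norm_num) hb
  have hc : 3 ≤ c := by
    by_contra hc
    push_neg at hc
    interval_cases c <;> omega
  obtain ⟨k, hk⟩ : (8:ℕ) ∣ 2 ^ c := by
    have := pow_dvd_pow 2 hc
    simpa using this
  have hmod : 3 ^ b % 8 = 1 ∨ 3 ^ b % 8 = 3 := by
    rcases Nat.even_or_odd b with ⟨m, hm⟩ | ⟨m, hm⟩
    · left
      subst hm
      rw [← two_mul, pow_mul]
      simp [Nat.pow_mod]
    · right
      subst hm
      rw [pow_add, pow_mul, Nat.mul_mod, Nat.pow_mod]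
      norm_num
  omega

lemma gers_aux2 (a d : ℕ) (heq : 2 ^ a + 1 = 3 ^ d) : a ≤ 3 := by
  by_contra ha
  push_neg at ha
  obtain ⟨k, hk⟩ : (16:ℕ) ∣ 2 ^ a := by
    have := pow_dvd_pow 2 ha
    simpa using this
  have h1 : 3 ^ d % 16 = 1 := by omega
  have hd : 3 ^ d % 16 = 3 ^ (d % 4) % 16 := by
    conv_lhs => rw [← Nat.div_add_mod d 4]
    rw [pow_add, pow_mul, Nat.mul_mod, Nat.pow_mod]
    norm_num
  have hd4 : d % 4 = 0 := by
    have hr : d % 4 = 0 ∨ d % 4 = 1 ∨ d % 4 = 2 ∨ d % 4 = 3 := by omega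
    rcases hr with hr | hr | hr | hr <;> rw [hr] at hd <;> norm_num at hd <;> omega
  obtain ⟨m, hm⟩ := Nat.dvd_of_mod_eq_zero hd4
  have h5 : 3 ^ d % 5 = 1 := by
    rw [hm, pow_mul, Nat.pow_mod]
    norm_num
  have h25 : (5:ℕ) ∣ 2 ^ a := Nat.dvd_of_mod_eq_zero (by omega)
  have := Nat.Prime.dvd_of_dvd_pow (by norm_num) h25
  norm_num at this

/-- Gersonides' Theorem (1342): if h and h+1 are both harmonic, then h ∈ {1,2,3,8}. -/
theorem gersonides (h : ℕ) (hpos : 0 < h) (h1 : IsHarmonic h) (h2 : IsHarmonic (h + 1)) :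
    h = 1 ∨ h = 2 ∨ h = 3 ∨ h = 8 := by
  obtain ⟨a, b, hab⟩ := h1
  obtain ⟨c, d, hcd⟩ := h2
  rcases Nat.eq_zero_or_pos a with ha | ha
  · subst ha
    simp at hab
    rcases Nat.eq_zero_or_pos b with hb | hb
    · subst hb; simp at hab; omega
    · -- h = 3^b with b ≥ 1, so 3 ∣ h, hence d = 0
      obtain ⟨t, ht⟩ : (3:ℕ) ∣ h := hab ▸ dvd_pow_self 3 hb.ne'
      have hd0 : d = 0 := by
        by_contra hd
        obtain ⟨s, hs⟩ : (3:ℕ) ∣ h + 1 :=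
          hcd ▸ Dvd.dvd.mul_left (dvd_pow_self 3 hd) _
        omega
      subst hd0
      simp at hcd
      have heq : 3 ^ b + 1 = 2 ^ c := by omega
      have hb1 := gers_aux1 b c heq
      have : b = 1 := by omega
      subst this
      norm_num at hab
      omega
  · -- a ≥ 1, so 2 ∣ h, hence c = 0
    obtain ⟨t, ht⟩ : (2:ℕ) ∣ h := hab ▸ Dvd.dvd.mul_right (dvd_pow_self 2 ha.ne') _
    have hc0 : c = 0 := by
      by_contra hc
      obtain ⟨s, hs⟩ : (2:ℕ) ∣ h + 1 :=
        hcd ▸ Dvd.dvd.mul_right (dvd_pow_self 2 hc) _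
      omega
    subst hc0
    simp at hcd
    have hd : 0 < d := by
      rcases Nat.eq_zero_or_pos d with hd | hd
      · subst hd; simp at hcd; omega
      · exact hd
    -- 3 ∣ h + 1, so b = 0
    obtain ⟨s, hs⟩ : (3:ℕ) ∣ h + 1 := hcd ▸ dvd_pow_self 3 hd.ne'
    have hb0 : b = 0 := by
      by_contra hb
      obtain ⟨u, hu⟩ : (3:ℕ) ∣ h := hab ▸ Dvd.dvd.mul_left (dvd_pow_self 3 hb) _
      omega
    subst hb0
    simp at hab
    have heq : 2 ^ a + 1 = 3 ^ d := by omega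
    have ha3 := gers_aux2 a d heq
    have hd3 : d < 3 := by
      by_contra hdc
      push_neg at hdc
      have h27 : (27:ℕ) ≤ 3 ^ d := by
        calc (27:ℕ) = 3 ^ 3 := by norm_num
        _ ≤ 3 ^ d := Nat.pow_le_pow_right (by norm_num) hdc
      have h2a : 2 ^ a ≤ 2 ^ 3 := Nat.pow_le_pow_right (by norm_num) ha3
      norm_num at h2a
      omega
    interval_cases a <;> interval_cases d <;> omega
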